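/- Let p be a prime with p ≡ -1 (mod 8), and let (x₁,y₁), ..., (x_l, y_l) be a closed walk in the graph G on ordered pairs of distinct elements of Z/pZ (adjacencies: (x,y)~(y,x), ~((x+y)/2,x), ~(y,2x-y)). Then l is even. -/
import Mathlib


def pairGraph (p : ℕ) [Fact p.Prime] :
    SimpleGraph {v : ZMod p × ZMod p // v.1 ≠ v.2} :=
  SimpleGraph.fromRel (fun u v =>
    v.val = (u.val.2, u.val.1) ∨
    v.val = ((u.val.1 + u.val.2) / 2, u.val.1) ∨
    v.val = (u.val.2, 2 * u.val.1 - u.val.2))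

theorem closed_walk_even_length (p : ℕ) [hp : Fact p.Prime] (hmod : p % 8 = 7)
    (v : {v : ZMod p × ZMod p // v.1 ≠ v.2}) (w : (pairGraph p).Walk v v) :
    Even w.length := by
  have hp2 : p ≠ 2 := by omega
  have h4 : p % 4 = 3 := by
    have := Nat.mod_mod_of_dvd p (by norm_num : (4:ℕ) ∣ 8)
    omega
  have h2 : (2 : ZMod p) ≠ 0 := by
    have : ((2:ℕ) : ZMod p) ≠ 0 := by
      rw [Ne, ZMod.natCast_eq_zero_iff]
      intro hdvd
      have := Nat.le_of_dvd (by norm_num) hdvd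
      omega
    exact_mod_cast this
  -- the invariant: quadratic character of x - y
  let χ := quadraticChar (ZMod p)
  let f : {v : ZMod p × ZMod p // v.1 ≠ v.2} → ℤ := fun a => χ (a.val.1 - a.val.2)
  have hd : ∀ a : {v : ZMod p × ZMod p // v.1 ≠ v.2}, a.val.1 - a.val.2 ≠ 0 :=
    fun a => sub_ne_zero.mpr a.2
  have hsq2 : IsSquare (2 : ZMod p) := by
    rw [ZMod.exists_sq_eq_two_iff hp2]
    omega
  have hχ2 : χ 2 = 1 := (quadraticChar_one_iff_isSquare h2).mpr hsq2
  have hχ2i : χ 2⁻¹ = 1 := by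
    have h2i : (2 : ZMod p)⁻¹ ≠ 0 := inv_ne_zero h2
    refine (quadraticChar_one_iff_isSquare h2i).mpr ?_
    obtain ⟨t, ht⟩ := hsq2
    exact ⟨t⁻¹, by rw [ht, mul_inv]⟩
  have hχn : χ (-1) = -1 := by
    rcases quadraticChar_dichotomy (F := ZMod p) (a := -1) (neg_ne_zero.mpr one_ne_zero)
      with h | h
    · exfalso
      rw [quadraticChar_one_iff_isSquare (neg_ne_zero.mpr one_ne_zero),
        ZMod.exists_sq_eq_neg_one_iff] at h
      exact h h4
    · exact h
  -- each edge flips the sign of f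
  have key : ∀ a b, (pairGraph p).Adj a b → f b = -f a := by
    have step : ∀ (a b : {v : ZMod p × ZMod p // v.1 ≠ v.2}) (e : ZMod p), χ e = 1 →
        b.val.1 - b.val.2 = -1 * (a.val.1 - a.val.2) * e → f b = -f a := by
      intro a b e he hval
      show χ (b.val.1 - b.val.2) = -χ (a.val.1 - a.val.2)
      rw [hval, map_mul, map_mul, hχn, he, mul_one]
      ring
    intro a b hab
    rw [pairGraph, SimpleGraph.fromRel_adj] at hab
    obtain ⟨-, hab⟩ := hab
    rcases hab with (h | h | h) | (h | h | h)
    · refine step a b 1 (map_one χ) ?_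
      have h1' : b.val.1 = a.val.2 := by rw [h]
      have h2' : b.val.2 = a.val.1 := by rw [h]
      rw [h1', h2']; ring
    · refine step a b 2⁻¹ hχ2i ?_
      have h1' : b.val.1 = (a.val.1 + a.val.2) / 2 := by rw [h]
      have h2' : b.val.2 = a.val.1 := by rw [h]
      rw [h1', h2']
      field_simp
      ring
    · refine step a b 2 hχ2 ?_
      have h1' : b.val.1 = a.val.2 := by rw [h]
      have h2' : b.val.2 = 2 * a.val.1 - a.val.2 := by rw [h]
      rw [h1', h2']; ring
    · refine step a b 1 (map_one χ) ?_
      have h1' : a.val.1 = b.val.2 := by rw [h]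
      have h2' : a.val.2 = b.val.1 := by rw [h]
      rw [h1', h2']; ring
    · refine step a b 2 hχ2 ?_
      have h1' : a.val.1 = (b.val.1 + b.val.2) / 2 := by rw [h]
      have h2' : a.val.2 = b.val.1 := by rw [h]
      rw [h1', h2']
      field_simp
      ring
    · refine step a b 2⁻¹ hχ2i ?_
      have h1' : a.val.1 = b.val.2 := by rw [h]
      have h2' : a.val.2 = 2 * b.val.1 - b.val.2 := by rw [h]
      rw [h1', h2']
      field_simp
      ring
  -- along a walk, f gets multiplied by (-1)^length
  have walkLem : ∀ {a b : {v : ZMod p × ZMod p // v.1 ≠ v.2}} (w : (pairGraph p).Walk a b),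
      f b = (-1 : ℤ) ^ w.length * f a := by
    intro a b w
    induction w with
    | nil => simp
    | cons h w ih =>
      rw [SimpleGraph.Walk.length_cons, pow_succ, ih, key _ _ h]
      ring
  have hfv : f v ≠ 0 := by
    have := quadraticChar_dichotomy (F := ZMod p) (hd v)
    show quadraticChar (ZMod p) (v.val.1 - v.val.2) ≠ 0
    omega
  have hpow : (-1 : ℤ) ^ w.length = 1 := by
    have h := walkLem w
    have : ((-1 : ℤ) ^ w.length - 1) * f v = 0 := by linarith [h]
    rcases mul_eq_zero.mp this with h' | h'
    · linarith
    · exact absurd h' hfv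
  exact (neg_one_pow_eq_one_iff_even (by norm_num : (-1:ℤ) ≠ 1)).mp hpow
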